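/- For all sufficiently large natural numbers n, setting Δ = n² + 4n − 4 and λ = (n−2+√Δ)/(2n) and θ = arccos(λ) and t* = ⌊π/(2θ)⌋, it holds that (π/2)·(√(n(2n+3)/8) − 2) ≤ t* ≤ (π/4)·√(n(n+2)). -/

import Mathlib

set_option maxHeartbeats 2000000 in
theorem measurement_time_bounds :
    ∃ N : ℕ, ∀ n ≥ N,
      let Δ : ℝ := (n : ℝ) ^ 2 + 4 * n - 4
      let lam : ℝ := ((n : ℝ) - 2 + Real.sqrt Δ) / (2 * n)
      let θ : ℝ := Real.arccos lam
      let tstar : ℤ := ⌊Real.pi / (2 * θ)⌋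
      Real.pi / 2 * (Real.sqrt ((n : ℝ) * (2 * n + 3) / 8) - 2) ≤ (tstar : ℝ) ∧
        (tstar : ℝ) ≤ Real.pi / 4 * Real.sqrt ((n : ℝ) * (n + 2)) := by
  use 100
  intro n hn
  intro Δ lam θ tstar
  have hx : (100 : ℝ) ≤ (n : ℝ) := by exact_mod_cast hn
  set x : ℝ := (n : ℝ) with hxdef
  have hx0 : (0 : ℝ) < x := by linarith
  have hΔ : Δ = x ^ 2 + 4 * x - 4 := rfl
  have hΔ0 : (0 : ℝ) ≤ Δ := by rw [hΔ]; nlinarith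
  set s : ℝ := Real.sqrt Δ with hsdef
  have hs0 : 0 ≤ s := Real.sqrt_nonneg _
  -- s < x + 2
  have hs_lt : s < x + 2 := by
    rw [hsdef, Real.sqrt_lt' (by linarith)]
    rw [hΔ]; nlinarith
  -- s ≥ x + 2 - 4/x
  have hs_ge : x + 2 - 4 / x ≤ s := by
    have h4x : 4 / x ≤ 1 := by rw [div_le_one hx0]; linarith
    rw [hsdef, Real.le_sqrt (by linarith) hΔ0]
    rw [hΔ]
    have h4 : (x + 2 - 4 / x) ^ 2 = x ^ 2 + 4 * x - 4 - (16 / x - 16 / x ^ 2) := by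
      field_simp; ring
    rw [h4]
    have : 16 / x ^ 2 ≤ 16 / x := by
      apply div_le_div_of_nonneg_left (by norm_num) hx0
      nlinarith
    linarith
  -- also s ≥ x
  have hs_ge' : x ≤ s := by
    rw [hsdef, Real.le_sqrt (by positivity) hΔ0, hΔ]; nlinarith
  have hssq : s ^ 2 = Δ := Real.sq_sqrt hΔ0
  have hlam : lam = (x - 2 + s) / (2 * x) := rfl
  clear_value s x
  have h2x : (0:ℝ) < 2 * x := by linarith
  have hlam_lt1 : lam < 1 := by
    rw [hlam, div_lt_one h2x]; linarith
  have hlam_ge : 1 - 2 / x ^ 2 ≤ lam := by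
    rw [hlam, le_div_iff₀ h2x]
    have : (1 - 2 / x ^ 2) * (2 * x) = 2 * x - 4 / x := by field_simp; ring
    rw [this]; linarith
  have hlam_pos : 0 < lam := by
    have h2 : 2 / x ^ 2 ≤ 2 / 100 ^ 2 := by
      apply div_le_div_of_nonneg_left (by norm_num) (by norm_num)
      nlinarith
    nlinarith [hlam_ge]
  have hlam_le1 : lam ≤ 1 := le_of_lt hlam_lt1
  have hlam_m1 : (-1 : ℝ) ≤ lam := by linarith
  -- θ basic facts
  have hθ : θ = Real.arccos lam := rfl
  have htstar : tstar = ⌊Real.pi / (2 * θ)⌋ := rfl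
  clear_value tstar θ lam Δ
  have hθ_pos : 0 < θ := by rw [hθ]; exact Real.arccos_pos.2 hlam_lt1
  have hθ_lt : θ < Real.pi / 2 := by
    rw [hθ, Real.arccos_eq_pi_div_two_sub_arcsin]
    have := Real.arcsin_pos.2 hlam_pos
    linarith
  have hcos : Real.cos θ = lam := by rw [hθ]; exact Real.cos_arccos hlam_m1 hlam_le1
  have hsin : Real.sin θ = Real.sqrt (1 - lam ^ 2) := by rw [hθ]; exact Real.sin_arccos lam
  -- lower bound on θ² : θ² ≥ 2(1 - lam) ≥ 4/(x(x+2))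
  have hθ_sq_lower : 4 / (x * (x + 2)) ≤ θ ^ 2 := by
    have h1 : 1 - θ ^ 2 / 2 ≤ lam := by
      rw [← hcos]; exact Real.one_sub_sq_div_two_le_cos
    -- 1 - lam ≥ 2/(x(x+2)) :  1 - lam = (x+2-s)/(2x), x+2-s = 8/(x+2+s) ≥ 8/(2(x+2))
    have hone : 1 - lam = (x + 2 - s) / (2 * x) := by
      rw [hlam]; field_simp; ring
    have hprod : (x + 2 - s) * (x + 2 + s) = 8 := by
      have h := hssq; rw [hΔ] at h; nlinarith [h]
    have hxs : x + 2 + s ≤ 2 * (x + 2) := by linarith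
    have hxspos : 0 < x + 2 + s := by linarith
    have hnn2 : 0 ≤ x + 2 - s := by linarith
    have hge : 4 / (x + 2) ≤ x + 2 - s := by
      rw [div_le_iff₀ (by linarith : (0:ℝ) < x + 2)]
      have hm := mul_le_mul_of_nonneg_left hxs hnn2
      have he : (x + 2 - s) * (2 * (x + 2)) = 2 * ((x + 2 - s) * (x + 2)) := by ring
      rw [he] at hm
      linarith [hprod]
    have hthis : 2 / (x * (x + 2)) ≤ 1 - lam := by
      rw [hone, div_le_div_iff₀ (by positivity) h2x]
      have h4 : 4 / (x + 2) * (x * (x + 2)) = 4 * x := by field_simp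
      have hmul := mul_le_mul_of_nonneg_right hge
        (le_of_lt (mul_pos hx0 (by linarith : (0:ℝ) < x + 2)))
      rw [h4] at hmul
      linarith
    have heq4 : 4 / (x * (x + 2)) = 2 * (2 / (x * (x + 2))) := by ring
    rw [heq4]
    linarith [hthis, h1]
  -- upper bound on θ² : θ² < (1-lam²)/lam² ≤ 8/(x(2x+3))
  have hθ_sq_upper : θ ^ 2 ≤ 8 / (x * (2 * x + 3)) := by
    have htan : θ < Real.tan θ := Real.lt_tan hθ_pos hθ_lt
    have htan_eq : Real.tan θ = Real.sqrt (1 - lam ^ 2) / lam := by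
      rw [Real.tan_eq_sin_div_cos, hsin, hcos]
    have hθlam : θ * lam < Real.sqrt (1 - lam ^ 2) := by
      rw [htan_eq] at htan
      calc θ * lam < Real.sqrt (1 - lam ^ 2) / lam * lam := by
            exact mul_lt_mul_of_pos_right htan hlam_pos
        _ = Real.sqrt (1 - lam ^ 2) := by field_simp
    have h1lam2 : (0:ℝ) ≤ 1 - lam ^ 2 := by nlinarith
    have hsq : (θ * lam) ^ 2 < 1 - lam ^ 2 := by
      have := Real.sq_sqrt h1lam2
      nlinarith [hθlam, mul_pos hθ_pos hlam_pos, Real.sqrt_nonneg (1 - lam ^ 2)]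
    -- bounds : 1 - lam ≤ 4/(x(2x+4-4/x)), lam ≥ 1 - 2/x², 1+lam ≤ 2
    -- show (1 - lam²) ≤ lam² * 8/(x(2x+3))
    have hdpos : (0:ℝ) < 2 * x + 4 - 4 / x := by
      have : 4 / x ≤ 4 := by rw [div_le_iff₀ hx0]; linarith
      linarith
    have honeu : 1 - lam ≤ 4 / (x * (2 * x + 4 - 4 / x)) := by
      have hone : 1 - lam = (x + 2 - s) / (2 * x) := by rw [hlam]; field_simp; ring
      have hprod : (x + 2 - s) * (x + 2 + s) = 8 := by
        rw [hΔ] at hssq; nlinarith [hssq]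
      have hden : 2 * x + 4 - 4 / x ≤ x + 2 + s := by
        have : 4 / x ≤ 4 := by rw [div_le_iff₀ hx0]; linarith
        linarith [hs_ge]
      have hnn : 0 ≤ x + 2 - s := le_of_lt (by linarith)
      rw [hone, div_le_div_iff₀ h2x (by positivity)]
      calc (x + 2 - s) * (x * (2 * x + 4 - 4 / x))
          = ((x + 2 - s) * (2 * x + 4 - 4 / x)) * x := by ring
        _ ≤ ((x + 2 - s) * (x + 2 + s)) * x := by
            exact mul_le_mul_of_nonneg_right
              (mul_le_mul_of_nonneg_left hden hnn) (le_of_lt hx0)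
        _ = 8 * x := by rw [hprod]
        _ = 4 * (2 * x) := by ring
    -- now combine: θ² lam² < 1 - lam² = (1-lam)(1+lam) ≤ 2(1-lam)
    -- θ² ≤ (1-lam²)/lam² ≤ 8/(x(2x+3))
    -- reduce to polynomial inequality; clear denominators by nlinarith after introducing u = 1/x
    have key : (1 - lam ^ 2) ≤ lam ^ 2 * (8 / (x * (2 * x + 3))) := by
      have h1pl : 1 + lam ≤ 2 := by linarith
      have h1ml : 0 ≤ 1 - lam := by linarith
      have hfac : 1 - lam ^ 2 ≤ 2 * (1 - lam) := by nlinarith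
      have h2lam : 2 * (1 - lam) ≤ 8 / (x * (2 * x + 4 - 4 / x)) := by
        have he : 8 / (x * (2 * x + 4 - 4 / x)) = 2 * (4 / (x * (2 * x + 4 - 4 / x))) := by
          ring
        rw [he]; linarith [honeu]
      have hlamsq : 1 - 4 / x ^ 2 ≤ lam ^ 2 := by
        have h2x2 : 2 / x ^ 2 ≤ 1 := by
          rw [div_le_one (by positivity)]; nlinarith
        have hpos2 : 0 ≤ 1 - 2 / x ^ 2 := by linarith
        have hm := mul_self_le_mul_self hpos2 hlam_ge
        have he : (1 - 2 / x ^ 2) * (1 - 2 / x ^ 2) = 1 - 4 / x ^ 2 + 4 / x ^ 4 := by ring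
        have hp : (0:ℝ) ≤ 4 / x ^ 4 := by positivity
        have he2 : lam * lam = lam ^ 2 := by ring
        rw [he, he2] at hm
        linarith
      -- Need: 8/(x(2x+4-4/x)) ≤ (1 - 4/x²) · 8/(x(2x+3))
      have hmain : 8 / (x * (2 * x + 4 - 4 / x)) ≤ (1 - 4 / x ^ 2) * (8 / (x * (2 * x + 3))) := by
        have e1 : (1 - 4 / x ^ 2) * (8 / (x * (2 * x + 3)))
            = (8 - 32 / x ^ 2) / (x * (2 * x + 3)) := by ring
        rw [e1, div_le_div_iff₀ (by positivity) (by positivity)]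
        have hr : (8 - 32 / x ^ 2) * (x * (2 * x + 4 - 4 / x))
            = 16 * x ^ 2 + 32 * x - 96 - 128 / x + 128 / x ^ 2 := by
          field_simp; ring
        rw [hr]
        have h1 : 128 / x ≤ 2 := by rw [div_le_iff₀ hx0]; linarith
        have h2 : (0:ℝ) ≤ 128 / x ^ 2 := by positivity
        nlinarith
      have hllsq : 0 ≤ lam ^ 2 := sq_nonneg _
      calc 1 - lam ^ 2 ≤ 2 * (1 - lam) := hfac
        _ ≤ 8 / (x * (2 * x + 4 - 4 / x)) := h2lam
        _ ≤ (1 - 4 / x ^ 2) * (8 / (x * (2 * x + 3))) := hmain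
        _ ≤ lam ^ 2 * (8 / (x * (2 * x + 3))) := by
            apply mul_le_mul_of_nonneg_right hlamsq (by positivity)
    have hlam2pos : 0 < lam ^ 2 := by positivity
    nlinarith [hsq, key]
  -- Now conclude
  have hπ := Real.pi_pos
  constructor
  · -- lower bound
    set B := Real.sqrt (x * (2 * x + 3) / 8) with hB
    have hB0 : 0 ≤ B := Real.sqrt_nonneg _
    have hBsq : B ^ 2 = x * (2 * x + 3) / 8 := Real.sq_sqrt (by positivity)
    have hθB : θ * B ≤ 1 := by
      have h1 : (θ * B) ^ 2 ≤ 1 := by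
        have : (θ * B) ^ 2 = θ ^ 2 * B ^ 2 := by ring
        rw [this, hBsq]
        calc θ ^ 2 * (x * (2 * x + 3) / 8) ≤ 8 / (x * (2 * x + 3)) * (x * (2 * x + 3) / 8) := by
              apply mul_le_mul_of_nonneg_right hθ_sq_upper (by positivity)
          _ = 1 := by field_simp
      nlinarith [mul_nonneg (le_of_lt hθ_pos) hB0]
    have hxx : Real.pi / 2 * B ≤ Real.pi / (2 * θ) := by
      rw [le_div_iff₀ (by linarith)]
      calc Real.pi / 2 * B * (2 * θ) = Real.pi * (θ * B) := by ring
        _ ≤ Real.pi * 1 := by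
            apply mul_le_mul_of_nonneg_left hθB (le_of_lt hπ)
        _ = Real.pi := by ring
    have hfl : Real.pi / (2 * θ) - 1 < (tstar : ℝ) := by rw [htstar]; exact Int.sub_one_lt_floor _
    have : Real.pi / 2 * (B - 2) = Real.pi / 2 * B - Real.pi := by ring
    rw [this]
    have hπ1 : (1:ℝ) ≤ Real.pi := by linarith [Real.pi_gt_three]
    linarith
  · -- upper bound
    set M := Real.sqrt (x * (x + 2)) with hM
    have hM0 : 0 ≤ M := Real.sqrt_nonneg _
    have hMsq : M ^ 2 = x * (x + 2) := Real.sq_sqrt (by positivity)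
    have hθM : 2 ≤ θ * M := by
      have h1 : 4 ≤ (θ * M) ^ 2 := by
        have : (θ * M) ^ 2 = θ ^ 2 * M ^ 2 := by ring
        rw [this, hMsq]
        calc (4:ℝ) = 4 / (x * (x + 2)) * (x * (x + 2)) := by field_simp
          _ ≤ θ ^ 2 * (x * (x + 2)) := by
              apply mul_le_mul_of_nonneg_right hθ_sq_lower (by positivity)
      nlinarith [mul_nonneg (le_of_lt hθ_pos) hM0]
    have hfl : (tstar : ℝ) ≤ Real.pi / (2 * θ) := by rw [htstar]; exact Int.floor_le _
    have hxx : Real.pi / (2 * θ) ≤ Real.pi / 4 * M := by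
      rw [div_le_iff₀ (by linarith)]
      calc Real.pi = Real.pi / 4 * 4 := by ring
        _ ≤ Real.pi / 4 * (2 * (θ * M)) := by
            apply mul_le_mul_of_nonneg_left (by linarith) (by positivity)
        _ = Real.pi / 4 * M * (2 * θ) := by ring
    linarith
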